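/- Fix A ≥ 0. Then lim_{σ→∞} [ (1/7) log((σ² + 1)/(2σ)) ] / log(σ²) = 1/14, and lim_{σ→∞} [ (1/6) log( (1/2)√((σ²+A)/(1+A)) + (1/2)√((1+A)/(σ²+A)) ) ] / log(σ²) = 1/12. Consequently, there exists σ₀ > 0 such that for all σ > σ₀, (1/6) log( (1/2)√((σ²+A)/(1+A)) + (1/2)√((1+A)/(σ²+A)) ) > (1/7) log((σ² + 1)/(2σ)); that is, for large σ the Hamming-code mixed-measurement lower bound on the outer conditional Chernoff information strictly exceeds the outer conditional Chernoff information of separate observations. -/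

import Mathlib

open Real Filter

lemma ratio_lim (g : ℝ → ℝ) (c : ℝ)
    (hg : Tendsto (fun σ => g σ - Real.log σ) atTop (nhds c)) :
    Tendsto (fun σ => g σ / Real.log (σ ^ 2)) atTop (nhds (1 / 2)) := by
  have hlt : Tendsto (fun σ : ℝ => 2 * Real.log σ) atTop atTop :=
    Real.tendsto_log_atTop.const_mul_atTop two_pos
  have h1 : Tendsto (fun σ : ℝ => (g σ - Real.log σ) / (2 * Real.log σ)) atTop (nhds 0) :=
    hg.div_atTop hlt
  have h2 : Tendsto (fun σ : ℝ => 1 / 2 + (g σ - Real.log σ) / (2 * Real.log σ))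
      atTop (nhds (1 / 2)) := by simpa using tendsto_const_nhds.add h1
  refine h2.congr' ?_
  filter_upwards [eventually_gt_atTop 1] with σ hσ
  have hlog : 0 < Real.log σ := Real.log_pos hσ
  have h2l : Real.log (σ ^ 2) = 2 * Real.log σ := by
    rw [Real.log_pow]; push_cast; ring
  rw [h2l]
  field_simp
  ring

lemma hiv : Tendsto (fun σ : ℝ => σ⁻¹) atTop (nhds 0) := tendsto_inv_atTop_zero

lemma lim1 : Tendsto (fun σ : ℝ => Real.log ((σ ^ 2 + 1) / (2 * σ)) - Real.log σ)
    atTop (nhds (Real.log (1 / 2))) := by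
  have hin : Tendsto (fun σ : ℝ => (σ ^ 2 + 1) / (2 * σ ^ 2)) atTop (nhds (1 / 2)) := by
    have h0 : Tendsto (fun σ : ℝ => 1 / 2 + (1 / 2) * (σ⁻¹ * σ⁻¹)) atTop (nhds (1 / 2)) := by
      simpa using tendsto_const_nhds.add ((hiv.mul hiv).const_mul (1 / 2 : ℝ))
    refine h0.congr' ?_
    filter_upwards [eventually_gt_atTop 0] with σ hσ
    have : σ ≠ 0 := ne_of_gt hσ
    field_simp
  have hc : ContinuousAt Real.log (1 / 2) := Real.continuousAt_log (by norm_num)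
  refine (hc.tendsto.comp hin).congr' ?_
  filter_upwards [eventually_gt_atTop 0] with σ hσ
  have hne : ((σ ^ 2 + 1) / (2 * σ)) ≠ 0 := by positivity
  have heq : (σ ^ 2 + 1) / (2 * σ ^ 2) = ((σ ^ 2 + 1) / (2 * σ)) / σ := by
    rw [div_div]; ring_nf
  simp only [Function.comp]
  rw [heq, Real.log_div hne (ne_of_gt hσ)]

lemma lim2 (A : ℝ) (hA : 0 ≤ A) :
    Tendsto (fun σ : ℝ => Real.log ((1 / 2) * Real.sqrt ((σ ^ 2 + A) / (1 + A))
      + (1 / 2) * Real.sqrt ((1 + A) / (σ ^ 2 + A))) - Real.log σ)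
    atTop (nhds (Real.log (1 / (2 * Real.sqrt (1 + A))))) := by
  have hA1 : (0:ℝ) < 1 + A := by linarith
  have hterm1 : Tendsto (fun σ : ℝ => (σ ^ 2 + A) / ((1 + A) * σ ^ 2)) atTop
      (nhds (1 / (1 + A))) := by
    have h0 : Tendsto (fun σ : ℝ => 1 / (1 + A) + (A / (1 + A)) * (σ⁻¹ * σ⁻¹)) atTop
        (nhds (1 / (1 + A))) := by
      simpa using tendsto_const_nhds.add ((hiv.mul hiv).const_mul (A / (1 + A)))
    refine h0.congr' ?_
    filter_upwards [eventually_gt_atTop 0] with σ hσ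
    have hσ0 : σ ≠ 0 := ne_of_gt hσ
    have hA0 : (1 + A) ≠ 0 := ne_of_gt hA1
    field_simp
  have hsq1 : Tendsto (fun σ : ℝ => Real.sqrt ((σ ^ 2 + A) / ((1 + A) * σ ^ 2))) atTop
      (nhds (1 / Real.sqrt (1 + A))) := by
    have := (Real.continuous_sqrt.continuousAt.tendsto.comp hterm1)
    simpa [Function.comp_def, one_div, Real.sqrt_inv] using this
  have hterm2 : Tendsto (fun σ : ℝ => Real.sqrt ((1 + A) / (σ ^ 2 + A)) * σ⁻¹) atTop
      (nhds 0) := by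
    have hd : Tendsto (fun σ : ℝ => σ ^ 2 + A) atTop atTop :=
      tendsto_atTop_add_const_right _ A (tendsto_pow_atTop two_ne_zero)
    have h2 : Tendsto (fun σ : ℝ => (1 + A) / (σ ^ 2 + A)) atTop (nhds 0) :=
      tendsto_const_nhds.div_atTop hd
    have h3 : Tendsto (fun σ : ℝ => Real.sqrt ((1 + A) / (σ ^ 2 + A))) atTop (nhds 0) := by
      have := (Real.continuous_sqrt.continuousAt.tendsto.comp h2)
      simpa [Function.comp_def] using this
    simpa using h3.mul hiv
  have hFs : Tendsto (fun σ : ℝ => (1 / 2) * Real.sqrt ((σ ^ 2 + A) / ((1 + A) * σ ^ 2))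
      + (1 / 2) * (Real.sqrt ((1 + A) / (σ ^ 2 + A)) * σ⁻¹)) atTop
      (nhds (1 / (2 * Real.sqrt (1 + A)))) := by
    have h := (hsq1.const_mul (1 / 2 : ℝ)).add (hterm2.const_mul (1 / 2 : ℝ))
    have heq : (1 / 2 : ℝ) * (1 / Real.sqrt (1 + A)) + (1 / 2) * 0
        = 1 / (2 * Real.sqrt (1 + A)) := by ring
    rwa [heq] at h
  have hsA : (0:ℝ) < Real.sqrt (1 + A) := Real.sqrt_pos.mpr hA1
  have hc : ContinuousAt Real.log (1 / (2 * Real.sqrt (1 + A))) :=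
    Real.continuousAt_log (by positivity)
  refine (hc.tendsto.comp hFs).congr' ?_
  filter_upwards [eventually_gt_atTop 0] with σ hσ
  have hσ2A : (0:ℝ) < σ ^ 2 + A := by positivity
  have hFpos : (0:ℝ) < (1 / 2) * Real.sqrt ((σ ^ 2 + A) / (1 + A))
      + (1 / 2) * Real.sqrt ((1 + A) / (σ ^ 2 + A)) := by positivity
  have h1 : Real.sqrt ((σ ^ 2 + A) / ((1 + A) * σ ^ 2))
      = Real.sqrt ((σ ^ 2 + A) / (1 + A)) / σ := by
    rw [show (σ ^ 2 + A) / ((1 + A) * σ ^ 2) = ((σ ^ 2 + A) / (1 + A)) / σ ^ 2 by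
      rw [div_div]]
    rw [Real.sqrt_div (by positivity), Real.sqrt_sq hσ.le]
  have key : (1 / 2) * Real.sqrt ((σ ^ 2 + A) / ((1 + A) * σ ^ 2))
      + (1 / 2) * (Real.sqrt ((1 + A) / (σ ^ 2 + A)) * σ⁻¹)
      = ((1 / 2) * Real.sqrt ((σ ^ 2 + A) / (1 + A))
        + (1 / 2) * Real.sqrt ((1 + A) / (σ ^ 2 + A))) / σ := by
    rw [h1]; ring
  simp only [Function.comp]
  rw [key, Real.log_div (ne_of_gt hFpos) (ne_of_gt hσ)]

/-- Asymptotics as σ → ∞: the separate-observation exponent (1/7) log((σ²+1)/(2σ)) scales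
as (1/14) log(σ²), the Hamming-code lower bound scales as (1/12) log(σ²), and hence for
all large σ the Hamming-code bound strictly exceeds the separate-observation exponent. -/
theorem stmt19 (A : ℝ) (hA : 0 ≤ A) :
    Tendsto (fun σ : ℝ =>
        ((1 / 7) * Real.log ((σ ^ 2 + 1) / (2 * σ))) / Real.log (σ ^ 2))
      atTop (nhds (1 / 14))
    ∧ Tendsto (fun σ : ℝ =>
        ((1 / 6) * Real.log ((1 / 2) * Real.sqrt ((σ ^ 2 + A) / (1 + A))
          + (1 / 2) * Real.sqrt ((1 + A) / (σ ^ 2 + A)))) / Real.log (σ ^ 2))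
      atTop (nhds (1 / 12))
    ∧ ∃ σ₀ : ℝ, 0 < σ₀ ∧ ∀ σ : ℝ, σ₀ < σ →
        (1 / 7) * Real.log ((σ ^ 2 + 1) / (2 * σ))
          < (1 / 6) * Real.log ((1 / 2) * Real.sqrt ((σ ^ 2 + A) / (1 + A))
              + (1 / 2) * Real.sqrt ((1 + A) / (σ ^ 2 + A))) := by
  have h1 := ratio_lim _ _ lim1
  have h2 := ratio_lim _ _ (lim2 A hA)
  have t1 : Tendsto (fun σ : ℝ =>
        ((1 / 7) * Real.log ((σ ^ 2 + 1) / (2 * σ))) / Real.log (σ ^ 2))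
      atTop (nhds (1 / 14)) := by
    refine Tendsto.congr (fun σ => (mul_div_assoc _ _ _).symm) ?_
    have : (1:ℝ) / 14 = (1 / 7) * (1 / 2) := by norm_num
    rw [this]
    exact h1.const_mul _
  have t2 : Tendsto (fun σ : ℝ =>
        ((1 / 6) * Real.log ((1 / 2) * Real.sqrt ((σ ^ 2 + A) / (1 + A))
          + (1 / 2) * Real.sqrt ((1 + A) / (σ ^ 2 + A)))) / Real.log (σ ^ 2))
      atTop (nhds (1 / 12)) := by
    refine Tendsto.congr (fun σ => (mul_div_assoc _ _ _).symm) ?_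
    have : (1:ℝ) / 12 = (1 / 6) * (1 / 2) := by norm_num
    rw [this]
    exact h2.const_mul _
  refine ⟨t1, t2, ?_⟩
  have hev : ∀ᶠ σ : ℝ in atTop,
      ((1 / 7) * Real.log ((σ ^ 2 + 1) / (2 * σ))) / Real.log (σ ^ 2)
      < ((1 / 6) * Real.log ((1 / 2) * Real.sqrt ((σ ^ 2 + A) / (1 + A))
          + (1 / 2) * Real.sqrt ((1 + A) / (σ ^ 2 + A)))) / Real.log (σ ^ 2) :=
    t1.eventually_lt t2 (by norm_num)
  rw [eventually_atTop] at hev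
  obtain ⟨a, ha⟩ := hev
  refine ⟨max a 1, lt_of_lt_of_le one_pos (le_max_right a 1), fun σ hσ => ?_⟩
  have hσ1 : 1 < σ := lt_of_le_of_lt (le_max_right a 1) hσ
  have hσa : a ≤ σ := le_of_lt (lt_of_le_of_lt (le_max_left a 1) hσ)
  have hlog : 0 < Real.log (σ ^ 2) := Real.log_pos (by nlinarith)
  exact (div_lt_div_iff_of_pos_right hlog).mp (ha σ hσa)
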